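/- Let N ∈ ℕ with N ≥ 2 and let γ satisfy the curve hypotheses with parameter N. Let p, q, r ∈ [1,∞], and suppose there is a constant C such that ‖Tf‖_{L^r_u L^q_x(ℝ²×[1,2])} ≤ C‖f‖_{L^p(ℝ²)} for all f ∈ L^p(ℝ²). Then 1/q ≤ 1/p (with the convention 1/∞ = 0). -/

import Mathlib

open MeasureTheory Filter Set
open scoped ENNReal NNReal

noncomputable section

/-- The averaging operator along the dilated plane curve `(u t, u γ(t))`:
`Tf(x,u) = ∫_0^1 f(x₁ - u t, x₂ - u γ(t)) dt`. -/
def Tavg (γ : ℝ → ℝ) (f : ℝ × ℝ → ℝ) (x : ℝ × ℝ) (u : ℝ) : ℝ :=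
  ∫ t in Set.Ioc (0 : ℝ) 1, f (x.1 - u * t, x.2 - u * γ t)

/-- The curve hypotheses with parameter `N`: `γ ∈ C^N((0,1])`, `γ(t) → 0` as `t → 0⁺`,
`γ` monotonic on `(0,1]`, with the lower bounds (i) for `j = 1,2` and the upper
bounds (ii) for `j = 1,…,N` on `|tʲ γ⁽ʲ⁾(t) / γ(t)|`. -/
def CurveHyp (γ : ℝ → ℝ) (N : ℕ) : Prop :=
  ContDiffOn ℝ N γ (Set.Ioc 0 1) ∧
  Filter.Tendsto γ (nhdsWithin 0 (Set.Ioi 0)) (nhds 0) ∧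
  (MonotoneOn γ (Set.Ioc 0 1) ∨ AntitoneOn γ (Set.Ioc 0 1)) ∧
  (∀ j : ℕ, 1 ≤ j → j ≤ 2 → ∃ C : ℝ, 0 < C ∧ ∀ t ∈ Set.Ioc (0 : ℝ) 1,
    C ≤ |t ^ j * iteratedDerivWithin j γ (Set.Ioc 0 1) t / γ t|) ∧
  (∀ j : ℕ, 1 ≤ j → j ≤ N → ∃ C : ℝ, 0 < C ∧ ∀ t ∈ Set.Ioc (0 : ℝ) 1,
    |t ^ j * iteratedDerivWithin j γ (Set.Ioc 0 1) t / γ t| ≤ C)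

/-- `ω := limsup_{t→0⁺} ln|γ(t)| / ln t`. -/
def curveOmega (γ : ℝ → ℝ) : ℝ :=
  Filter.limsup (fun t => Real.log |γ t| / Real.log t) (nhdsWithin 0 (Set.Ioi 0))

/-- The `L^q(μ)` norm (valued in `ℝ≥0∞`) of an `ℝ≥0∞`-valued function, with the
essential supremum when `q = ∞`. -/
def eLpNormENN {α : Type*} [MeasurableSpace α] (g : α → ℝ≥0∞) (q : ℝ≥0∞)
    (μ : Measure α) : ℝ≥0∞ :=
  if q = ∞ then essSup g μ else (∫⁻ a, g a ^ q.toReal ∂μ) ^ (1 / q.toReal)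


/-- The time-space mixed norm `‖F‖_{L^r_u L^q_x(ℝ² × [1,2])}`. -/
def mixedUX (r q : ℝ≥0∞) (F : ℝ × ℝ → ℝ → ℝ) : ℝ≥0∞ :=
  eLpNormENN (fun u => eLpNorm (fun x => F x u) q (volume : Measure (ℝ × ℝ))) r
    ((volume : Measure ℝ).restrict (Set.Icc 1 2))

lemma aux_le_eLpNormENN {g : ℝ → ℝ≥0∞} {c : ℝ≥0∞} {r : ℝ≥0∞} (hr : 1 ≤ r)
    (hg : ∀ᵐ u ∂((volume : Measure ℝ).restrict (Set.Icc 1 2)), c ≤ g u) :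
    c ≤ eLpNormENN g r ((volume : Measure ℝ).restrict (Set.Icc 1 2)) := by
  have hμ : ((volume : Measure ℝ).restrict (Set.Icc 1 2)) Set.univ = 1 := by
    rw [Measure.restrict_apply_univ, Real.volume_Icc]
    norm_num
  have hne : ((volume : Measure ℝ).restrict (Set.Icc (1:ℝ) 2)) ≠ 0 := by
    intro h0
    rw [h0] at hμ
    simp at hμ
  unfold eLpNormENN
  split_ifs with hrtop
  · calc c = essSup (fun _ : ℝ => c) ((volume : Measure ℝ).restrict (Set.Icc 1 2)) :=
        (essSup_const c hne).symm
      _ ≤ _ := essSup_mono_ae hg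
  · have hr0 : r ≠ 0 := (lt_of_lt_of_le zero_lt_one hr).ne'
    have hrt : 0 < r.toReal := ENNReal.toReal_pos hr0 hrtop
    have hint : c ^ r.toReal ≤ ∫⁻ u, g u ^ r.toReal ∂((volume : Measure ℝ).restrict (Set.Icc 1 2)) := by
      calc c ^ r.toReal
          = ∫⁻ _, c ^ r.toReal ∂((volume : Measure ℝ).restrict (Set.Icc 1 2)) := by
            rw [lintegral_const, hμ, mul_one]
        _ ≤ _ := lintegral_mono_ae (hg.mono fun u hu => ENNReal.rpow_le_rpow hu hrt.le)
    calc c = (c ^ r.toReal) ^ (1 / r.toReal) := by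
          rw [← ENNReal.rpow_mul, mul_one_div_cancel hrt.ne', ENNReal.rpow_one]
      _ ≤ _ := ENNReal.rpow_le_rpow hint (by positivity)

lemma gamma_abs_le {γ : ℝ → ℝ}
    (hlim : Filter.Tendsto γ (nhdsWithin 0 (Set.Ioi 0)) (nhds 0))
    (hmono : MonotoneOn γ (Set.Ioc 0 1) ∨ AntitoneOn γ (Set.Ioc 0 1)) :
    ∀ t ∈ Set.Ioc (0:ℝ) 1, |γ t| ≤ |γ 1| := by
  intro t ht
  have h1 : (1:ℝ) ∈ Set.Ioc (0:ℝ) 1 := by norm_num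
  have hmem : Set.Ioo (0:ℝ) t ∈ nhdsWithin (0:ℝ) (Set.Ioi 0) :=
    Ioo_mem_nhdsGT_of_mem ⟨le_refl 0, ht.1⟩
  rcases hmono with hm | hm
  · have h2 : γ t ≤ γ 1 := hm ht h1 ht.2
    have h3 : 0 ≤ γ t := by
      refine le_of_tendsto hlim ?_
      filter_upwards [hmem] with s hs
      exact hm ⟨hs.1, hs.2.le.trans ht.2⟩ ht hs.2.le
    rw [abs_of_nonneg h3]
    exact h2.trans (le_abs_self _)
  · have h2 : γ 1 ≤ γ t := hm ht h1 ht.2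
    have h3 : γ t ≤ 0 := by
      refine ge_of_tendsto hlim ?_
      filter_upwards [hmem] with s hs
      exact hm ⟨hs.1, hs.2.le.trans ht.2⟩ ht hs.2.le
    rw [abs_of_nonpos h3]
    exact (neg_le_neg h2).trans (neg_le_abs _)

/-- Theorem 1.5, necessary condition (I): if the time-space estimate
`L^p_x → L^r_u L^q_x` holds for `T`, then `1/q ≤ 1/p`. -/
theorem timeSpace_necessity_I (N : ℕ) (hN : 2 ≤ N) (γ : ℝ → ℝ) (h : CurveHyp γ N)
    (p q r : ℝ≥0∞) (hp : 1 ≤ p) (hq : 1 ≤ q) (hr : 1 ≤ r)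
    (hbdd : ∃ C : ℝ, ∀ f : ℝ × ℝ → ℝ, MemLp f p volume →
      mixedUX r q (Tavg γ f) ≤ ENNReal.ofReal C * eLpNorm f p volume) :
    (q⁻¹).toReal ≤ (p⁻¹).toReal := by
  rcases eq_or_ne q ∞ with rfl | hqtop
  · simp
  obtain ⟨C, hC⟩ := hbdd
  obtain ⟨-, hlim, hmono, -, -⟩ := h
  set M := |γ 1| with hMdef
  have hM0 : 0 ≤ M := abs_nonneg _
  have hMle := gamma_abs_le hlim hmono
  have hq0 : q ≠ 0 := (lt_of_lt_of_le zero_lt_one hq).ne'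
  have hqt : 0 < q.toReal := ENNReal.toReal_pos hq0 hqtop
  have ha : (q⁻¹).toReal = 1 / q.toReal := by rw [ENNReal.toReal_inv, one_div]
  have hb : (p⁻¹).toReal = 1 / p.toReal := by rw [ENNReal.toReal_inv, one_div]
  set a := 1 / q.toReal with hadef
  set b := 1 / p.toReal with hbdef
  have ha0 : 0 < a := by positivity
  have hb0 : 0 ≤ b := by positivity
  rw [ha, hb]
  -- key inequality
  have key : ∀ R : ℝ, 2 + 4 * M ≤ R →
      (R ^ 2 : ℝ) ^ a ≤ max C 0 * (4 * R ^ 2) ^ b := by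
    intro R hR
    have hR2 : (2:ℝ) ≤ R := by linarith
    have hR0 : (0:ℝ) < R := by linarith
    set B : Set (ℝ × ℝ) := Set.Icc (-R) R ×ˢ Set.Icc (-R) R with hBdef
    have hBmeas : MeasurableSet B := measurableSet_Icc.prod measurableSet_Icc
    set f : ℝ × ℝ → ℝ := B.indicator fun _ => (1:ℝ) with hfdef
    have hμB : volume B = ENNReal.ofReal (4 * R ^ 2) := by
      rw [hBdef, Measure.volume_eq_prod, Measure.prod_prod, Real.volume_Icc,
        ← ENNReal.ofReal_mul (by linarith)]
      congr 1
      ring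
    have hmem : MemLp f p volume :=
      memLp_indicator_const p hBmeas 1 (Or.inr (by rw [hμB]; exact ENNReal.ofReal_ne_top))
    have hup := hC f hmem
    have hfle : eLpNorm f p volume ≤ (ENNReal.ofReal (4 * R ^ 2)) ^ b := by
      calc eLpNorm f p volume ≤ ‖(1:ℝ)‖₊ * volume B ^ (1 / p.toReal) :=
            eLpNorm_indicator_const_le 1 p
        _ = (ENNReal.ofReal (4 * R ^ 2)) ^ b := by
            rw [hμB, ← hbdef]
            simp
    set B' : Set (ℝ × ℝ) := Set.Icc (-R + 2) R ×ˢ Set.Icc (-R + 2*M) (R - 2*M) with hB'def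
    have hB'meas : MeasurableSet B' := measurableSet_Icc.prod measurableSet_Icc
    have hμB' : ENNReal.ofReal (R ^ 2) ≤ volume B' := by
      have hv : volume B'
          = ENNReal.ofReal (R - (-R + 2)) * ENNReal.ofReal ((R - 2*M) - (-R + 2*M)) := by
        rw [hB'def, Measure.volume_eq_prod, Measure.prod_prod, Real.volume_Icc, Real.volume_Icc]
      rw [hv, ← ENNReal.ofReal_mul (by linarith)]
      apply ENNReal.ofReal_le_ofReal
      nlinarith
    have hT1 : ∀ x ∈ B', ∀ u ∈ Set.Icc (1:ℝ) 2, Tavg γ f x u = 1 := by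
      intro x hx u hu
      have hx1 : x.1 ∈ Set.Icc (-R + 2) R := hx.1
      have hx2 : x.2 ∈ Set.Icc (-R + 2*M) (R - 2*M) := hx.2
      unfold Tavg
      rw [setIntegral_congr_fun measurableSet_Ioc (g := fun _ => (1:ℝ)) ?_]
      · rw [setIntegral_const, Real.volume_real_Ioc, smul_eq_mul]
        norm_num
      · intro t ht
        have hg : |γ t| ≤ M := hMle t ht
        have hu0 : (0:ℝ) ≤ u := by linarith [hu.1]
        have hguv : |u * γ t| ≤ 2 * M := by
          rw [abs_mul, abs_of_nonneg hu0]
          nlinarith [abs_nonneg (γ t), hu.2]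
        obtain ⟨hgl, hgr⟩ := abs_le.mp hguv
        have hut0 : 0 < u * t := mul_pos (by linarith [hu.1]) ht.1
        have hut2 : u * t ≤ 2 := by nlinarith [hu.2, ht.2, ht.1.le, hu.1]
        show f (x.1 - u * t, x.2 - u * γ t) = 1
        apply Set.indicator_of_mem
        refine ⟨⟨?_, ?_⟩, ⟨?_, ?_⟩⟩ <;>
          simp only [] <;> [skip; skip; skip; skip]
        · linarith [hx1.1]
        · linarith [hx1.2]
        · linarith [hx2.1]
        · linarith [hx2.2]
    have hlow : ∀ u ∈ Set.Icc (1:ℝ) 2,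
        (ENNReal.ofReal (R ^ 2)) ^ a ≤ eLpNorm (fun x => Tavg γ f x u) q volume := by
      intro u hu
      have h1 : eLpNorm (B'.indicator fun _ => (1:ℝ)) q volume
          ≤ eLpNorm (fun x => Tavg γ f x u) q volume := by
        apply eLpNorm_mono
        intro x
        by_cases hx : x ∈ B'
        · rw [Set.indicator_of_mem hx, hT1 x hx u hu]
        · rw [Set.indicator_of_notMem hx]
          simp
      refine le_trans ?_ h1
      rw [eLpNorm_indicator_const hB'meas hq0 hqtop, ← hadef]
      simp only [enorm_one, nnnorm_one, ENNReal.coe_one, one_mul]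
      exact ENNReal.rpow_le_rpow hμB' ha0.le
    have hmix : (ENNReal.ofReal (R ^ 2)) ^ a ≤ mixedUX r q (Tavg γ f) := by
      apply aux_le_eLpNormENN hr
      filter_upwards [ae_restrict_mem measurableSet_Icc] with u hu
      exact hlow u hu
    have hmain : (ENNReal.ofReal (R ^ 2)) ^ a
        ≤ ENNReal.ofReal (max C 0) * (ENNReal.ofReal (4 * R ^ 2)) ^ b := by
      calc (ENNReal.ofReal (R ^ 2)) ^ a ≤ mixedUX r q (Tavg γ f) := hmix
        _ ≤ ENNReal.ofReal C * eLpNorm f p volume := hup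
        _ ≤ _ := mul_le_mul' (ENNReal.ofReal_le_ofReal (le_max_left _ _)) hfle
    have hfin : ENNReal.ofReal (max C 0) * (ENNReal.ofReal (4 * R ^ 2)) ^ b ≠ ∞ :=
      ENNReal.mul_ne_top ENNReal.ofReal_ne_top
        (ENNReal.rpow_ne_top_of_nonneg hb0 ENNReal.ofReal_ne_top)
    have hmr := ENNReal.toReal_mono hfin hmain
    rw [ENNReal.toReal_mul, ← ENNReal.toReal_rpow, ← ENNReal.toReal_rpow,
      ENNReal.toReal_ofReal (le_max_right C 0),
      ENNReal.toReal_ofReal (by positivity : (0:ℝ) ≤ R ^ 2),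
      ENNReal.toReal_ofReal (by positivity : (0:ℝ) ≤ 4 * R ^ 2)] at hmr
    exact hmr
  -- conclude by letting R → ∞
  by_contra hcon
  push_neg at hcon
  set K := max C 0 * 4 ^ b with hKdef
  have hK0 : 0 ≤ K := by positivity
  set e := 2 * (a - b) with hedef
  have he0 : 0 < e := by simp only [hedef]; linarith
  set R := max (2 + 4*M) ((K+1) ^ e⁻¹) with hRdef
  have hRge : 2 + 4*M ≤ R := le_max_left _ _
  have hR0 : (0:ℝ) < R := lt_of_lt_of_le (by linarith) hRge
  have hkey := key R hRge
  have hpow : ∀ c : ℝ, (R^2 : ℝ) ^ c = R ^ (2 * c) := by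
    intro c
    rw [← Real.rpow_natCast R 2, ← Real.rpow_mul hR0.le]
    norm_num
  have hkey2 : R ^ (2*a) ≤ K * R ^ (2*b) := by
    have h4 : (4 * R ^ 2 : ℝ) ^ b = 4 ^ b * (R ^ 2) ^ b :=
      Real.mul_rpow (by norm_num) (by positivity)
    calc R ^ (2*a) = (R^2) ^ a := (hpow a).symm
      _ ≤ max C 0 * (4 * R ^ 2) ^ b := hkey
      _ = K * (R^2) ^ b := by rw [h4, hKdef]; ring
      _ = K * R ^ (2*b) := by rw [hpow b]
  have hRb : (0:ℝ) < R ^ (2*b) := Real.rpow_pos_of_pos hR0 _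
  have h3 : R ^ e ≤ K := by
    have h2 : R ^ (2*a) = R ^ e * R ^ (2*b) := by
      rw [← Real.rpow_add hR0]
      congr 1
      ring
    rw [h2] at hkey2
    exact le_of_mul_le_mul_right hkey2 hRb
  have h5 : (K+1) ^ e⁻¹ ≤ R := le_max_right _ _
  have h4 : K + 1 ≤ R ^ e := by
    calc K + 1 = ((K+1) ^ e⁻¹) ^ e := by
          rw [← Real.rpow_mul (by linarith), inv_mul_cancel₀ he0.ne', Real.rpow_one]
      _ ≤ R ^ e := Real.rpow_le_rpow (Real.rpow_nonneg (by linarith) _) h5 he0.le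
  linarith


end
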